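/- Uniqueness under two-sided blow-up rate (exponential case): Suppose u₁, u₂ ∈ C²(Ω) both satisfy Lu_i(x) = e^{u_i(x)} for all x ∈ Ω and u_i(x) → +∞ as d(x) → 0 (i = 1, 2), and suppose there are constants N₁, N₂, ρ > 0 such that N₁ d(x)^{−2} ≤ e^{u_i(x)} ≤ N₂ d(x)^{−2} for all x in Δ_ρ := {x ∈ Ω : d(x) < ρ} and i = 1, 2. Then u₁ ≡ u₂ in Ω. -/

import Mathlib

open Metric Set Filter Real Bornology

/-- First-order partial derivative `D_i u (x)`. -/
noncomputable def pd {n : ℕ} (u : EuclideanSpace ℝ (Fin n) → ℝ) (i : Fin n)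
    (x : EuclideanSpace ℝ (Fin n)) : ℝ :=
  fderiv ℝ u x (EuclideanSpace.single i 1)

/-- Second-order partial derivative `D_{ij} u (x)`. -/
noncomputable def pd2 {n : ℕ} (u : EuclideanSpace ℝ (Fin n) → ℝ) (i j : Fin n)
    (x : EuclideanSpace ℝ (Fin n)) : ℝ :=
  fderiv ℝ (fun y => fderiv ℝ u y (EuclideanSpace.single j 1)) x (EuclideanSpace.single i 1)

/-- The operator `L u = a^{ij} D_{ij} u + b^i D_i u - c u`. -/
noncomputable def Lop {n : ℕ} (a : EuclideanSpace ℝ (Fin n) → Fin n → Fin n → ℝ)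
    (b : EuclideanSpace ℝ (Fin n) → Fin n → ℝ) (c : EuclideanSpace ℝ (Fin n) → ℝ)
    (u : EuclideanSpace ℝ (Fin n) → ℝ) (x : EuclideanSpace ℝ (Fin n)) : ℝ :=
  (∑ i, ∑ j, a x i j * pd2 u i j x) + (∑ i, b x i * pd u i x) - c x * u x

/-- The standing assumptions on the coefficients of `L`: measurability, symmetry,
`Σ (b^i)² ≤ K`, `0 ≤ c ≤ K`, `K > 0`, and uniform ellipticity `λ|ξ|² ≤ aᵢⱼξᵢξⱼ ≤ Λ|ξ|²`
with `0 < λ ≤ Λ`. -/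
def CoeffsOK {n : ℕ} (a : EuclideanSpace ℝ (Fin n) → Fin n → Fin n → ℝ)
    (b : EuclideanSpace ℝ (Fin n) → Fin n → ℝ) (c : EuclideanSpace ℝ (Fin n) → ℝ)
    (K lam Lam : ℝ) : Prop :=
  (∀ i j, Measurable fun x => a x i j) ∧ (∀ i, Measurable fun x => b x i) ∧
  Measurable c ∧ (∀ x i j, a x i j = a x j i) ∧
  (∀ x, ∑ i, (b x i) ^ 2 ≤ K) ∧ (∀ x, 0 ≤ c x ∧ c x ≤ K) ∧
  0 < K ∧ 0 < lam ∧ lam ≤ Lam ∧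
  (∀ x (ξ : EuclideanSpace ℝ (Fin n)),
    lam * ‖ξ‖ ^ 2 ≤ ∑ i, ∑ j, a x i j * ξ i * ξ j ∧
    ∑ i, ∑ j, a x i j * ξ i * ξ j ≤ Lam * ‖ξ‖ ^ 2)

/-- `u(x) → +∞` as `d(x) := dist(x, ∂Ω) → 0`. -/
def BlowsUp {n : ℕ} (Ω : Set (EuclideanSpace ℝ (Fin n)))
    (u : EuclideanSpace ℝ (Fin n) → ℝ) : Prop :=
  ∀ M : ℝ, ∃ δ > 0, ∀ x ∈ Ω, infDist x (frontier Ω) < δ → M ≤ u x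


open Topology

section Aux
variable {n : ℕ} {U Ω : Set (EuclideanSpace ℝ (Fin n))}
    {w u u₁ u₂ : EuclideanSpace ℝ (Fin n) → ℝ}
lemma euclid_decomp {n : ℕ} (v : EuclideanSpace ℝ (Fin n)) :
    v = ∑ i, v i • EuclideanSpace.single i (1:ℝ) := by
  ext j
  rw [WithLp.ofLp_sum, Finset.sum_apply]
  simp [EuclideanSpace.single_apply]


lemma clm_apply_decomp {n : ℕ} (f : EuclideanSpace ℝ (Fin n) →L[ℝ] ℝ)
    (v : EuclideanSpace ℝ (Fin n)) : f v = ∑ i, v i * f (EuclideanSpace.single i 1) := by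
  conv_lhs => rw [euclid_decomp v]
  rw [map_sum]
  simp [smul_eq_mul]

lemma fderiv_diffAt (hU : IsOpen U) (hw : ContDiffOn ℝ 2 w U)
    {x₀ : EuclideanSpace ℝ (Fin n)} (hx : x₀ ∈ U) :
    DifferentiableAt ℝ (fderiv ℝ w) x₀ := by
  have h1 : ContDiffOn ℝ 1 (fderiv ℝ w) U := hw.fderiv_of_isOpen hU (by norm_num)
  exact (h1.differentiableOn one_ne_zero).differentiableAt (hU.mem_nhds hx)


lemma g_diffAt (hU : IsOpen U) (hw : ContDiffOn ℝ 2 w U)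
    {x₀ : EuclideanSpace ℝ (Fin n)} (hx : x₀ ∈ U) (v : EuclideanSpace ℝ (Fin n)) :
    DifferentiableAt ℝ (fun y => fderiv ℝ w y v) x₀ :=
  (ContinuousLinearMap.apply ℝ ℝ v).differentiableAt.comp x₀ (fderiv_diffAt hU hw hx)


lemma sdt (hU : IsOpen U) (hw : ContDiffOn ℝ 2 w U)
    {x₀ : EuclideanSpace ℝ (Fin n)} (hx : x₀ ∈ U) (hmax : IsMaxOn w U x₀)
    (v : EuclideanSpace ℝ (Fin n)) :
    fderiv ℝ (fun y => fderiv ℝ w y v) x₀ v ≤ 0 := by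
  by_contra hQ
  push_neg at hQ
  set Q := fderiv ℝ (fun y => fderiv ℝ w y v) x₀ v with hQdef
  -- local max facts
  have hloc : IsLocalMax w x₀ := hmax.isLocalMax (hU.mem_nhds hx)
  have hgrad : fderiv ℝ w x₀ = 0 := hloc.fderiv_eq_zero
  -- line
  obtain ⟨r, hr, hball⟩ := Metric.isOpen_iff.1 hU x₀ hx
  set ℓ : ℝ → EuclideanSpace ℝ (Fin n) := fun t => x₀ + t • v with hℓ
  have hℓ0 : ℓ 0 = x₀ := by simp [hℓ]
  have hℓder : ∀ t : ℝ, HasDerivAt ℓ v t := by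
    intro t
    have := ((hasDerivAt_id' t).smul_const v).const_add x₀
    rwa [one_smul] at this
  -- h
  set h : ℝ → ℝ := fun t => fderiv ℝ w (ℓ t) v with hh
  have hh0 : h 0 = 0 := by simp [hh, hℓ0, hgrad]
  have hhder : HasDerivAt h Q 0 := by
    have hφ : DifferentiableAt ℝ (fun y => fderiv ℝ w y v) x₀ := g_diffAt hU hw hx v
    have hd0 : HasDerivAt ℓ v 0 := hℓder 0
    have := (hℓ0 ▸ hφ.hasFDerivAt).comp_hasDerivAt 0 hd0
    rw [hℓ0] at this
    exact this
  -- h positive on right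
  have hpos : ∀ᶠ t in 𝓝[>] (0:ℝ), 0 < h t := by
    have hslope : Tendsto (slope h 0) (𝓝[≠] 0) (𝓝 Q) :=
      hasDerivAt_iff_tendsto_slope.1 hhder
    have hslope' : Tendsto (slope h 0) (𝓝[>] 0) (𝓝 Q) :=
      hslope.mono_left (nhdsWithin_mono _ (fun t ht => ne_of_gt ht))
    have : ∀ᶠ t in 𝓝[>] (0:ℝ), 0 < slope h 0 t :=
      hslope'.eventually (eventually_gt_nhds hQ)
    filter_upwards [this, self_mem_nhdsWithin] with t ht ht0
    have : slope h 0 t = h t / t := by simp [slope, hh0, div_eq_inv_mul]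
    rw [this] at ht
    have := mul_pos ht (show (0:ℝ) < t from ht0)
    rwa [div_mul_cancel₀] at this
    exact ne_of_gt ht0
  -- get δ
  have hball' : ∀ᶠ t in 𝓝 (0:ℝ), ℓ t ∈ ball x₀ r := by
    have hc : ContinuousAt ℓ 0 := (hℓder 0).continuousAt
    have := hc.preimage_mem_nhds (by rw [hℓ0]; exact ball_mem_nhds x₀ hr)
    exact this
  have hcomb : ∀ᶠ t in 𝓝[>] (0:ℝ), 0 < h t ∧ ℓ t ∈ ball x₀ r :=
    hpos.and (hball'.filter_mono nhdsWithin_le_nhds)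
  obtain ⟨δ, hδmem, hδ⟩ := (mem_nhdsGT_iff_exists_Ioo_subset).1 hcomb
  have hδpos : (0:ℝ) < δ := hδmem
  set δ' : ℝ := δ / 2 with hδ'
  have hδ'pos : 0 < δ' := by positivity
  have hδ'mem : ∀ t ∈ Set.Ioo (0:ℝ) δ', 0 < h t ∧ ℓ t ∈ ball x₀ r := by
    intro t ht
    exact hδ ⟨ht.1, lt_of_lt_of_le ht.2 (by linarith)⟩
  have hmem : ∀ t ∈ Set.Icc (0:ℝ) δ', ℓ t ∈ U := by
    intro t ht
    rcases eq_or_lt_of_le ht.1 with h0 | h0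
    · rw [← h0, hℓ0]; exact hx
    · rcases eq_or_lt_of_le ht.2 with h1 | h1
      · exact hball (hδ ⟨h0, by rw [h1]; linarith⟩).2
      · exact hball (hδ'mem t ⟨h0, h1⟩).2
  set g : ℝ → ℝ := fun t => w (ℓ t) with hg
  have hwd : DifferentiableOn ℝ w U := hw.differentiableOn (by norm_num)
  have hgder : ∀ t ∈ Set.Ioo (0:ℝ) δ', HasDerivAt g (h t) t := by
    intro t ht
    have hmem' : ℓ t ∈ U := hball (hδ'mem t ht).2
    have hwdiff : DifferentiableAt ℝ w (ℓ t) :=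
      hwd.differentiableAt (hU.mem_nhds hmem')
    exact hwdiff.hasFDerivAt.comp_hasDerivAt t (hℓder t)
  have hgc : ContinuousOn g (Set.Icc 0 δ') :=
    (hw.continuousOn.comp (Continuous.continuousOn (by fun_prop)) hmem)
  have hmono : StrictMonoOn g (Set.Icc 0 δ') := by
    apply strictMonoOn_of_deriv_pos (convex_Icc _ _) hgc
    intro t ht
    rw [interior_Icc] at ht
    rw [(hgder t ht).deriv]
    exact (hδ'mem t ht).1
  have hlt : g 0 < g δ' :=
    hmono (Set.left_mem_Icc.2 (le_of_lt hδ'pos)) (Set.right_mem_Icc.2 (le_of_lt hδ'pos)) hδ'pos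
  have h2 : w (ℓ δ') ≤ w x₀ := hmax (hmem δ' (Set.right_mem_Icc.2 (le_of_lt hδ'pos)))
  have h3 : g 0 = w x₀ := by rw [hg]; simp only []; rw [hℓ0]
  have h4 : g δ' = w (ℓ δ') := rfl
  rw [h3, h4] at hlt
  linarith

lemma quad_expand (hU : IsOpen U) (hw : ContDiffOn ℝ 2 w U)
    {x₀ : EuclideanSpace ℝ (Fin n)} (hx : x₀ ∈ U) (v : EuclideanSpace ℝ (Fin n)) :
    fderiv ℝ (fun y => fderiv ℝ w y v) x₀ v
      = ∑ i, ∑ j, v i * v j * pd2 w i j x₀ := by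
  have hfun : (fun y => fderiv ℝ w y v)
      = fun y => ∑ j, v j * fderiv ℝ w y (EuclideanSpace.single j 1) := by
    funext y
    exact clm_apply_decomp (fderiv ℝ w y) v
  rw [hfun]
  have hdiff : ∀ j : Fin n, DifferentiableAt ℝ
      (fun y => v j * fderiv ℝ w y (EuclideanSpace.single j 1)) x₀ := fun j =>
    (g_diffAt hU hw hx _).const_mul _
  rw [fderiv_fun_sum (fun j _ => hdiff j)]
  rw [ContinuousLinearMap.sum_apply]
  have hterm : ∀ j : Fin n,
      (fderiv ℝ (fun y => v j * fderiv ℝ w y (EuclideanSpace.single j 1)) x₀) v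
        = v j * ∑ i, v i * pd2 w i j x₀ := by
    intro j
    rw [fderiv_const_mul (g_diffAt hU hw hx _)]
    rw [ContinuousLinearMap.smul_apply]
    rw [clm_apply_decomp (fderiv ℝ (fun y => fderiv ℝ w y (EuclideanSpace.single j 1)) x₀) v]
    rfl
  rw [Finset.sum_congr rfl (fun j _ => hterm j)]
  rw [Finset.sum_comm]
  apply Finset.sum_congr rfl
  intro i _
  rw [Finset.mul_sum]
  apply Finset.sum_congr rfl
  intro j _
  ring

open scoped MatrixOrder in
lemma psd_contraction {n : ℕ} (A : Matrix (Fin n) (Fin n) ℝ) (hA : A.PosSemidef)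
    (H : Fin n → Fin n → ℝ) (hH : ∀ v : Fin n → ℝ, ∑ i, ∑ j, v i * v j * H i j ≤ 0) :
    ∑ i, ∑ j, A i j * H i j ≤ 0 := by
  set B := CFC.sqrt A with hB
  have hBB : B * B = A := CFC.sqrt_mul_sqrt_self A hA.nonneg
  have hBsym : ∀ i j, B i j = B j i := by
    intro i j
    have := (Matrix.nonneg_iff_posSemidef.1 (CFC.sqrt_nonneg A)).1
    calc B i j = B.conjTranspose i j := by rw [this]
    _ = B j i := by simp [Matrix.conjTranspose_apply]
  have hAe : ∀ i j, A i j = ∑ k, B i k * B j k := by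
    intro i j
    rw [← hBB, Matrix.mul_apply]
    exact Finset.sum_congr rfl fun k _ => by rw [hBsym k j]
  have key : ∑ i, ∑ j, A i j * H i j = ∑ k, ∑ i, ∑ j, (B i k) * (B j k) * H i j := by
    have step1 : ∑ i, ∑ j, A i j * H i j
        = ∑ i, ∑ j, ∑ k, B i k * B j k * H i j := by
      apply Finset.sum_congr rfl; intro i _
      apply Finset.sum_congr rfl; intro j _
      rw [hAe i j, Finset.sum_mul]
    rw [step1]
    have step2 : ∑ i, ∑ j, ∑ k, B i k * B j k * H i j
        = ∑ i, ∑ k, ∑ j, B i k * B j k * H i j :=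
      Finset.sum_congr rfl fun i _ => Finset.sum_comm
    rw [step2]
    exact Finset.sum_comm
  rw [key]
  apply Finset.sum_nonpos
  intro k _
  exact hH (fun i => B i k)


lemma psd_of_elliptic {n : ℕ} (a : Fin n → Fin n → ℝ)
    (hsym : ∀ i j, a i j = a j i)
    (hell : ∀ v : Fin n → ℝ, 0 ≤ ∑ i, ∑ j, a i j * v i * v j) :
    (Matrix.of a).PosSemidef := by
  rw [Matrix.posSemidef_iff_dotProduct_mulVec]
  constructor
  · ext i j
    simp [Matrix.conjTranspose_apply, hsym i j]
  · intro x
    have := hell x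
    simp only [dotProduct, Matrix.mulVec, Matrix.of_apply, star_trivial]
    calc (0:ℝ) ≤ ∑ i, ∑ j, a i j * x i * x j := this
    _ = ∑ i, x i * ∑ j, a i j * x j := by
        apply Finset.sum_congr rfl; intro i _; rw [Finset.mul_sum]
        apply Finset.sum_congr rfl; intro j _; ring

lemma compactK (hΩo : IsOpen Ω) (hΩb : IsBounded Ω) {δ : ℝ} (hδ : 0 < δ) :
    IsCompact (closure Ω ∩ {y | δ ≤ infDist y (frontier Ω)}) ∧
    (closure Ω ∩ {y | δ ≤ infDist y (frontier Ω)}) ⊆ Ω := by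
  constructor
  · apply IsCompact.inter_right
    · exact hΩb.isCompact_closure
    · exact isClosed_le continuous_const (continuous_infDist_pt _)
  · rintro y ⟨hy1, hy2⟩
    by_contra hy
    have hfr : y ∈ frontier Ω := ⟨hy1, fun h => hy (hΩo.interior_eq ▸ h)⟩
    have : infDist y (frontier Ω) = 0 := infDist_zero_of_mem hfr
    have hy2' : δ ≤ infDist y (frontier Ω) := hy2
    rw [this] at hy2'
    linarith


lemma lower_bound (hΩo : IsOpen Ω) (hΩb : IsBounded Ω)
    {u : EuclideanSpace ℝ (Fin n) → ℝ} (hu : ContinuousOn u Ω) (hb : BlowsUp Ω u) :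
    ∃ B : ℝ, 0 ≤ B ∧ ∀ x ∈ Ω, -B ≤ u x := by
  obtain ⟨δ, hδpos, h0⟩ := hb 0
  obtain ⟨hKc, hKΩ⟩ := compactK hΩo hΩb hδpos
  set K := closure Ω ∩ {y | δ ≤ infDist y (frontier Ω)} with hK
  rcases K.eq_empty_or_nonempty with hKe | hKne
  · refine ⟨0, le_rfl, fun x hx => ?_⟩
    by_cases hx2 : infDist x (frontier Ω) < δ
    · simpa using h0 x hx hx2
    · exact absurd (show x ∈ K from ⟨subset_closure hx, le_of_not_gt hx2⟩) (hKe ▸ notMem_empty x)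
  · obtain ⟨z, hzK, hzmin⟩ := hKc.exists_isMinOn hKne (hu.mono hKΩ)
    refine ⟨max 0 (-u z), le_max_left _ _, fun x hx => ?_⟩
    by_cases hx2 : infDist x (frontier Ω) < δ
    · have := h0 x hx hx2
      have h1 : -(max 0 (-u z)) ≤ 0 := neg_nonpos.2 (le_max_left _ _)
      linarith
    · have hxK : x ∈ K := ⟨subset_closure hx, le_of_not_gt hx2⟩
      have := hzmin hxK
      have h2 : -(max 0 (-u z)) ≤ u z := by
        have := le_max_right 0 (-u z); linarith
      exact h2.trans this


lemma exists_max (hΩo : IsOpen Ω) (hΩb : IsBounded Ω)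
    {w : EuclideanSpace ℝ (Fin n) → ℝ} (hw : ContinuousOn w Ω)
    {x₁ : EuclideanSpace ℝ (Fin n)} (hx₁ : x₁ ∈ Ω) (hd₁ : 0 < infDist x₁ (frontier Ω))
    (hdecay : ∀ T : ℝ, ∃ δ > 0, ∀ y ∈ Ω, infDist y (frontier Ω) < δ → w y ≤ T) :
    ∃ x₀ ∈ Ω, ∀ y ∈ Ω, w y ≤ w x₀ := by
  obtain ⟨δ, hδpos, hδ⟩ := hdecay (w x₁ - 1)
  set δ' := min δ (infDist x₁ (frontier Ω)) with hδ'
  have hδ'pos : 0 < δ' := lt_min hδpos hd₁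
  obtain ⟨hKc, hKΩ⟩ := compactK hΩo hΩb hδ'pos
  set K := closure Ω ∩ {y | δ' ≤ infDist y (frontier Ω)} with hK
  have hx₁K : x₁ ∈ K :=
    ⟨subset_closure hx₁, show δ' ≤ infDist x₁ (frontier Ω) from min_le_right _ _⟩
  obtain ⟨x₀, hx₀K, hx₀max⟩ := hKc.exists_isMaxOn ⟨x₁, hx₁K⟩ (hw.mono hKΩ)
  refine ⟨x₀, hKΩ hx₀K, fun y hy => ?_⟩
  by_cases hy2 : infDist y (frontier Ω) < δ'
  · have h1 : w y ≤ w x₁ - 1 := hδ y hy (lt_of_lt_of_le hy2 (min_le_left _ _))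
    have h2 : w x₁ ≤ w x₀ := hx₀max hx₁K
    linarith
  · exact hx₀max (⟨subset_closure hy, le_of_not_gt hy2⟩ : y ∈ K)


lemma pd2_comb (hU : IsOpen U) (hu₁ : ContDiffOn ℝ 2 u₁ U) (hu₂ : ContDiffOn ℝ 2 u₂ U)
    (t : ℝ) {x₀ : EuclideanSpace ℝ (Fin n)} (hx : x₀ ∈ U) (i j : Fin n) :
    pd2 (fun y => u₁ y - t * u₂ y) i j x₀ = pd2 u₁ i j x₀ - t * pd2 u₂ i j x₀ := by
  set ej := EuclideanSpace.single j (1:ℝ)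
  have hEq : (fun y => fderiv ℝ (fun z => u₁ z - t * u₂ z) y ej)
      =ᶠ[𝓝 x₀] (fun y => fderiv ℝ u₁ y ej - t * fderiv ℝ u₂ y ej) := by
    filter_upwards [hU.mem_nhds hx] with y hy
    have hd₁ : DifferentiableAt ℝ u₁ y :=
      (hu₁.differentiableOn (by norm_num)).differentiableAt (hU.mem_nhds hy)
    have hd₂ : DifferentiableAt ℝ u₂ y :=
      (hu₂.differentiableOn (by norm_num)).differentiableAt (hU.mem_nhds hy)
    rw [fderiv_fun_sub hd₁ (hd₂.const_mul t), fderiv_const_mul hd₂]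
    simp
  have h1 : pd2 (fun y => u₁ y - t * u₂ y) i j x₀
      = fderiv ℝ (fun y => fderiv ℝ u₁ y ej - t * fderiv ℝ u₂ y ej) x₀
          (EuclideanSpace.single i 1) := by
    unfold pd2
    rw [hEq.fderiv_eq]
  rw [h1]
  have hg₁ := g_diffAt hU hu₁ hx ej
  have hg₂ := g_diffAt hU hu₂ hx ej
  rw [fderiv_fun_sub hg₁ (hg₂.const_mul t), fderiv_const_mul hg₂]
  simp [pd2, ej]


lemma pd_comb (hU : IsOpen U) (hu₁ : ContDiffOn ℝ 2 u₁ U) (hu₂ : ContDiffOn ℝ 2 u₂ U)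
    (t : ℝ) {x₀ : EuclideanSpace ℝ (Fin n)} (hx : x₀ ∈ U) (i : Fin n) :
    pd (fun y => u₁ y - t * u₂ y) i x₀ = pd u₁ i x₀ - t * pd u₂ i x₀ := by
  have hd₁ : DifferentiableAt ℝ u₁ x₀ :=
    (hu₁.differentiableOn (by norm_num)).differentiableAt (hU.mem_nhds hx)
  have hd₂ : DifferentiableAt ℝ u₂ x₀ :=
    (hu₂.differentiableOn (by norm_num)).differentiableAt (hU.mem_nhds hx)
  unfold pd
  rw [fderiv_fun_sub hd₁ (hd₂.const_mul t), fderiv_const_mul hd₂]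
  simp


lemma key_one_sided {n : ℕ} (Ω : Set (EuclideanSpace ℝ (Fin n)))
    (hΩo : IsOpen Ω) (hΩne : Ω.Nonempty) (hΩb : IsBounded Ω)
    (a : EuclideanSpace ℝ (Fin n) → Fin n → Fin n → ℝ)
    (b : EuclideanSpace ℝ (Fin n) → Fin n → ℝ)
    (c : EuclideanSpace ℝ (Fin n) → ℝ)
    (hsym : ∀ x i j, a x i j = a x j i)
    (hc0 : ∀ x, 0 ≤ c x)
    (lam : ℝ) (hlam : 0 < lam)
    (hell : ∀ x (ξ : EuclideanSpace ℝ (Fin n)),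
      lam * ‖ξ‖ ^ 2 ≤ ∑ i, ∑ j, a x i j * ξ i * ξ j)
    (u₁ u₂ : EuclideanSpace ℝ (Fin n) → ℝ)
    (hu₁ : ContDiffOn ℝ 2 u₁ Ω) (hu₂ : ContDiffOn ℝ 2 u₂ Ω)
    (heq₁ : ∀ x ∈ Ω, Lop a b c u₁ x = Real.exp (u₁ x))
    (heq₂ : ∀ x ∈ Ω, Lop a b c u₂ x = Real.exp (u₂ x))
    (hb₂ : BlowsUp Ω u₂)
    (N₁ N₂ ρ : ℝ) (hN₁ : 0 < N₁) (hN₂ : 0 < N₂) (hρ : 0 < ρ)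
    (hrate₁ : ∀ x ∈ Ω, infDist x (frontier Ω) < ρ →
      Real.exp (u₁ x) ≤ N₂ / infDist x (frontier Ω) ^ 2)
    (hrate₂ : ∀ x ∈ Ω, infDist x (frontier Ω) < ρ →
      N₁ / infDist x (frontier Ω) ^ 2 ≤ Real.exp (u₂ x)) :
    ∀ x ∈ Ω, u₁ x ≤ u₂ x := by
  classical
  obtain ⟨x₁, hx₁⟩ := hΩne
  -- frontier is nonempty
  by_cases hfr : (frontier Ω).Nonempty
  case neg =>
    exfalso
    rw [not_nonempty_iff_eq_empty] at hfr
    have h0 : infDist x₁ (frontier Ω) = 0 := by rw [hfr]; exact infDist_empty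
    have := hrate₁ x₁ hx₁ (by rw [h0]; exact hρ)
    rw [h0] at this
    simp only [ne_eq, OfNat.ofNat_ne_zero, not_false_eq_true, zero_pow, div_zero] at this
    exact absurd this (not_le.2 (Real.exp_pos _))
  -- positivity of distance inside Ω
  have hdpos : ∀ x ∈ Ω, 0 < infDist x (frontier Ω) := by
    intro x hx
    refine (isClosed_frontier.notMem_iff_infDist_pos hfr).1 ?_
    intro h
    have hxint : x ∈ interior Ω := by rw [hΩo.interior_eq]; exact hx
    exact h.2 hxint
  -- lower bound for u₂
  obtain ⟨B, hB0, hB⟩ := lower_bound hΩo hΩb hu₂.continuousOn hb₂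
  -- main estimate for each ε
  have main : ∀ ε : ℝ, 0 < ε → ∀ x ∈ Ω,
      u₁ x - (1 + ε) * u₂ x ≤ Real.log (1 + ε) + ε * B := by
    intro ε hε
    have h1ε : (0:ℝ) < 1 + ε := by linarith
    set w : EuclideanSpace ℝ (Fin n) → ℝ := fun y => u₁ y - (1 + ε) * u₂ y with hw
    have hwC2 : ContDiffOn ℝ 2 w Ω := hu₁.sub (contDiffOn_const.mul hu₂)
    -- decay near the boundary
    have hdecay : ∀ T : ℝ, ∃ δ > 0, ∀ y ∈ Ω, infDist y (frontier Ω) < δ → w y ≤ T := by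
      intro T
      set C : ℝ := Real.log N₂ - (1 + ε) * Real.log N₁ with hC
      refine ⟨min ρ (Real.exp ((T - C) / (2 * ε))), lt_min hρ (Real.exp_pos _), ?_⟩
      intro y hy hyd
      set d := infDist y (frontier Ω) with hd
      have hdp : 0 < d := hdpos y hy
      have hdρ : d < ρ := lt_of_lt_of_le hyd (min_le_left _ _)
      have hu₁y : u₁ y ≤ Real.log N₂ - 2 * Real.log d := by
        have h1 := hrate₁ y hy hdρ
        have h2 : u₁ y ≤ Real.log (N₂ / d ^ 2) := by
          have := Real.log_le_log (Real.exp_pos _) h1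
          rwa [Real.log_exp] at this
        rw [Real.log_div (ne_of_gt hN₂) (by positivity), Real.log_pow] at h2
        push_cast at h2
        linarith
      have hu₂y : Real.log N₁ - 2 * Real.log d ≤ u₂ y := by
        have h1 := hrate₂ y hy hdρ
        have h2 : Real.log (N₁ / d ^ 2) ≤ u₂ y := by
          have := Real.log_le_log (by positivity) h1
          rwa [Real.log_exp] at this
        rw [Real.log_div (ne_of_gt hN₁) (by positivity), Real.log_pow] at h2
        push_cast at h2
        linarith
      have hlogd : Real.log d < (T - C) / (2 * ε) := by
        have := Real.log_lt_log hdp (lt_of_lt_of_le hyd (min_le_right _ _))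
        rwa [Real.log_exp] at this
      have h2εlogd : 2 * ε * Real.log d < T - C := by
        have := (mul_lt_mul_of_pos_left hlogd (by positivity : (0:ℝ) < 2 * ε))
        rwa [mul_div_cancel₀ _ (by positivity : (2:ℝ) * ε ≠ 0)] at this
      have : w y ≤ C + 2 * ε * Real.log d := by
        simp only [hw]
        have := mul_le_mul_of_nonneg_left hu₂y (le_of_lt h1ε)
        nlinarith [hu₁y]
      linarith
    -- maximum point
    obtain ⟨x₀, hx₀Ω, hx₀max⟩ := exists_max hΩo hΩb hwC2.continuousOn hx₁ (hdpos x₁ hx₁) hdecay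
    have hmax : IsMaxOn w Ω x₀ := fun y hy => hx₀max y hy
    -- gradient vanishes
    have hgrad : fderiv ℝ w x₀ = 0 :=
      (hmax.isLocalMax (hΩo.mem_nhds hx₀Ω)).fderiv_eq_zero
    have hpdw : ∀ i, pd w i x₀ = 0 := by
      intro i; unfold pd; rw [hgrad]; rfl
    -- second-order term nonpositive
    have hsum2 : ∑ i, ∑ j, a x₀ i j * pd2 w i j x₀ ≤ 0 := by
      have hA : (Matrix.of (a x₀)).PosSemidef := by
        apply psd_of_elliptic (a x₀) (hsym x₀)
        intro v
        set ξ : EuclideanSpace ℝ (Fin n) := (WithLp.equiv 2 (Fin n → ℝ)).symm v with hξ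
        have h1 := hell x₀ ξ
        have h2 : (0:ℝ) ≤ lam * ‖ξ‖ ^ 2 := by positivity
        have h3 : ∑ i, ∑ j, a x₀ i j * ξ i * ξ j = ∑ i, ∑ j, a x₀ i j * v i * v j := rfl
        linarith [h3 ▸ le_trans h2 h1]
      have hH : ∀ v : Fin n → ℝ, ∑ i, ∑ j, v i * v j * pd2 w i j x₀ ≤ 0 := by
        intro v
        set ξ : EuclideanSpace ℝ (Fin n) := (WithLp.equiv 2 (Fin n → ℝ)).symm v with hξ
        have h1 := sdt hΩo hwC2 hx₀Ω hmax ξ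
        rw [quad_expand hΩo hwC2 hx₀Ω ξ] at h1
        exact h1
      exact psd_contraction (Matrix.of (a x₀)) hA (fun i j => pd2 w i j x₀) hH
    -- the differential inequality at x₀
    have hLop : Real.exp (u₁ x₀) - (1 + ε) * Real.exp (u₂ x₀) ≤ - c x₀ * w x₀ := by
      have e₁ := heq₁ x₀ hx₀Ω
      have e₂ := heq₂ x₀ hx₀Ω
      unfold Lop at e₁ e₂
      have hS : ∑ i, ∑ j, a x₀ i j * pd2 w i j x₀
          = ∑ i, ∑ j, a x₀ i j * pd2 u₁ i j x₀
            - (1 + ε) * ∑ i, ∑ j, a x₀ i j * pd2 u₂ i j x₀ := by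
        rw [Finset.mul_sum, ← Finset.sum_sub_distrib]
        apply Finset.sum_congr rfl; intro i _
        rw [Finset.mul_sum, ← Finset.sum_sub_distrib]
        apply Finset.sum_congr rfl; intro j _
        rw [pd2_comb hΩo hu₁ hu₂ (1 + ε) hx₀Ω i j]
        ring
      have hT : ∑ i, b x₀ i * pd u₁ i x₀ - (1 + ε) * ∑ i, b x₀ i * pd u₂ i x₀ = 0 := by
        rw [Finset.mul_sum, ← Finset.sum_sub_distrib]
        rw [show (0:ℝ) = ∑ i : Fin n, b x₀ i * pd w i x₀ by
          simp [hpdw]]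
        apply Finset.sum_congr rfl; intro i _
        rw [pd_comb hΩo hu₁ hu₂ (1 + ε) hx₀Ω i]
        ring
      have hww : w x₀ = u₁ x₀ - (1 + ε) * u₂ x₀ := rfl
      have hEq : Real.exp (u₁ x₀) - (1 + ε) * Real.exp (u₂ x₀)
          = (∑ i, ∑ j, a x₀ i j * pd2 w i j x₀) - c x₀ * w x₀ := by
        rw [hww]
        linear_combination -e₁ + (1 + ε) * e₂ - hS + hT
      have hcw : (0:ℝ) ≤ c x₀ * w x₀ - c x₀ * w x₀ := by linarith
      rw [hEq]
      linarith [hsum2]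
    -- bound at the maximum
    have hbound : w x₀ ≤ Real.log (1 + ε) + ε * B := by
      rcases le_or_gt (w x₀) 0 with h | h
      · have : 0 ≤ Real.log (1 + ε) := Real.log_nonneg (by linarith)
        nlinarith
      · have hc : -c x₀ * w x₀ ≤ 0 := by
          have := hc0 x₀; nlinarith
        have hexp : Real.exp (u₁ x₀) ≤ (1 + ε) * Real.exp (u₂ x₀) := by linarith
        have hlog : u₁ x₀ ≤ Real.log (1 + ε) + u₂ x₀ := by
          have h2 : (1 + ε) * Real.exp (u₂ x₀) = Real.exp (Real.log (1 + ε) + u₂ x₀) := by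
            rw [Real.exp_add, Real.exp_log h1ε]
          rw [h2] at hexp
          exact (Real.exp_le_exp.1 hexp)
        have hu₂B := hB x₀ hx₀Ω
        have : w x₀ = u₁ x₀ - (1 + ε) * u₂ x₀ := rfl
        nlinarith
    intro x hx
    have := hx₀max x hx
    simp only [hw] at this hbound ⊢
    linarith
  -- conclude by letting ε → 0
  intro x hx
  by_contra hcon
  push_neg at hcon
  set s := u₁ x - u₂ x with hs
  have hspos : 0 < s := by simp [hs]; linarith
  set D := |u₂ x| + B + 1 with hD
  have hDpos : 0 < D := by positivity
  set ε := s / (2 * D) with hε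
  have hεpos : 0 < ε := by positivity
  have hmain := main ε hεpos x hx
  have hlog : Real.log (1 + ε) ≤ ε := by
    have := Real.log_le_sub_one_of_pos (show (0:ℝ) < 1 + ε by linarith)
    linarith
  have habs : ε * u₂ x ≤ ε * |u₂ x| :=
    mul_le_mul_of_nonneg_left (le_abs_self _) (le_of_lt hεpos)
  have hεD : ε * D = s / 2 := by
    rw [hε]; field_simp
  nlinarith [hmain, hlog, habs, hεD]
end Aux

/-- Theorem 4.1 of the paper, exponential case. If `u₁, u₂` are
blow-up solutions of `Lu = e^u` both satisfying the two-sided bound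
`N₁ d^{-2} ≤ e^{u_i} ≤ N₂ d^{-2}` in `Δ_ρ = {x ∈ Ω : d(x) < ρ}`, then `u₁ ≡ u₂`
in `Ω`. -/
theorem uniqueness_two_sided_rate_exponential {n : ℕ} (hn : 2 ≤ n)
    (Ω : Set (EuclideanSpace ℝ (Fin n)))
    (hΩo : IsOpen Ω) (hΩc : IsConnected Ω) (hΩb : IsBounded Ω)
    (a : EuclideanSpace ℝ (Fin n) → Fin n → Fin n → ℝ)
    (b : EuclideanSpace ℝ (Fin n) → Fin n → ℝ)
    (c : EuclideanSpace ℝ (Fin n) → ℝ)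
    (K lam Lam : ℝ) (hco : CoeffsOK a b c K lam Lam)
    (u₁ u₂ : EuclideanSpace ℝ (Fin n) → ℝ)
    (hu₁ : ContDiffOn ℝ 2 u₁ Ω) (hu₂ : ContDiffOn ℝ 2 u₂ Ω)
    (heq₁ : ∀ x ∈ Ω, Lop a b c u₁ x = Real.exp (u₁ x))
    (heq₂ : ∀ x ∈ Ω, Lop a b c u₂ x = Real.exp (u₂ x))
    (hb₁ : BlowsUp Ω u₁) (hb₂ : BlowsUp Ω u₂)
    (N₁ N₂ ρ : ℝ) (hN₁ : 0 < N₁) (hN₂ : 0 < N₂) (hρ : 0 < ρ)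
    (hrate₁ : ∀ x ∈ Ω, infDist x (frontier Ω) < ρ →
      N₁ / infDist x (frontier Ω) ^ 2 ≤ Real.exp (u₁ x) ∧
      Real.exp (u₁ x) ≤ N₂ / infDist x (frontier Ω) ^ 2)
    (hrate₂ : ∀ x ∈ Ω, infDist x (frontier Ω) < ρ →
      N₁ / infDist x (frontier Ω) ^ 2 ≤ Real.exp (u₂ x) ∧
      Real.exp (u₂ x) ≤ N₂ / infDist x (frontier Ω) ^ 2) :
    EqOn u₁ u₂ Ω := by
  intro x hx
  obtain ⟨hmeas_a, hmeas_b, hmeas_c, hsym, hbK, hc, hK, hlam, hlamLam, hellip⟩ := hco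
  have h12 := key_one_sided Ω hΩo hΩc.nonempty hΩb a b c hsym (fun x => (hc x).1)
    lam hlam (fun x ξ => (hellip x ξ).1) u₁ u₂ hu₁ hu₂ heq₁ heq₂ hb₂ N₁ N₂ ρ hN₁ hN₂ hρ
    (fun y hy hyd => (hrate₁ y hy hyd).2) (fun y hy hyd => (hrate₂ y hy hyd).1)
  have h21 := key_one_sided Ω hΩo hΩc.nonempty hΩb a b c hsym (fun x => (hc x).1)
    lam hlam (fun x ξ => (hellip x ξ).1) u₂ u₁ hu₂ hu₁ heq₂ heq₁ hb₁ N₁ N₂ ρ hN₁ hN₂ hρ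
    (fun y hy hyd => (hrate₂ y hy hyd).2) (fun y hy hyd => (hrate₁ y hy hyd).1)
  exact le_antisymm (h12 x hx) (h21 x hx)
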